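/- Let D be an integral domain. Then the closure, in the constructible topology of the space Over(D) of overrings of D, of the set of semilocal Prüfer overrings of D equals the set of integrally closed overrings of D. -/

import Mathlib

open Set TopologicalSpace

/-- A topology `t` on `X` makes `X` a spectral space: quasi-compact, `T0`, sober, with a basis
of quasi-compact open sets closed under finite (binary) intersections. -/
def IsSpectral (X : Type*) (t : TopologicalSpace X) : Prop :=
  @CompactSpace X t ∧ @T0Space X t ∧ @QuasiSober X t ∧
    ∃ B : Set (Set X),
      (∀ s ∈ B, @IsCompact X t s ∧ @IsOpen X t s) ∧
      (∀ s ∈ B, ∀ u ∈ B, s ∩ u ∈ B) ∧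
      @TopologicalSpace.IsTopologicalBasis X t B

/-- The specialization order of a topology: `x ≤ y` iff `y ∈ closure {x}`. -/
def specLE {X : Type*} (t : TopologicalSpace X) (x y : X) : Prop := y ∈ @closure X t {x}

/-- `b` is the supremum of `S` with respect to the specialization order of `t`. -/
def IsSupSpec {X : Type*} (t : TopologicalSpace X) (S : Set X) (b : X) : Prop :=
  (∀ x ∈ S, specLE t x b) ∧ ∀ c, (∀ x ∈ S, specLE t x c) → specLE t b c

/-- `b` is the infimum of `S` with respect to the specialization order of `t`. -/
def IsInfSpec {X : Type*} (t : TopologicalSpace X) (S : Set X) (b : X) : Prop :=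
  (∀ x ∈ S, specLE t b x) ∧ ∀ c, (∀ x ∈ S, specLE t c x) → specLE t c b

/-- The constructible (patch) topology associated to a topology `t`: the coarsest topology in
which all quasi-compact `t`-open sets are clopen. -/
def patchOf {X : Type*} (t : TopologicalSpace X) : TopologicalSpace X :=
  TopologicalSpace.generateFrom
    {s : Set X | (@IsCompact X t s ∧ @IsOpen X t s) ∨ (@IsCompact X t sᶜ ∧ @IsOpen X t sᶜ)}

/-- Closure with respect to the constructible (patch) topology of `t`. -/
def patchClosure {X : Type*} (t : TopologicalSpace X) (Y : Set X) : Set X :=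
  @closure X (patchOf t) Y

/-- The Zariski topology on the space of overrings of `D` (realized as `D`-subalgebras of the
fraction field), with basic open sets `B(F) = {R | F ⊆ R}` for finite `F`. -/
def zarOverTop (D K : Type*) [CommSemiring D] [CommSemiring K] [Algebra D K] :
    TopologicalSpace (Subalgebra D K) :=
  TopologicalSpace.generateFrom
    {U : Set (Subalgebra D K) |
      ∃ F : Set K, F.Finite ∧ U = {R : Subalgebra D K | F ⊆ (R : Set K)}}

/-- A domain is a Prüfer domain iff its localization at every prime ideal is a valuation ring,
i.e. divisibility is total in each such localization. -/
def IsPrufer (R : Type*) [CommRing R] : Prop :=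
  ∀ (P : Ideal R) (hP : P.IsPrime),
    ∀ a b : @Localization.AtPrime R _ P hP, a ∣ b ∨ b ∣ a

/-- A ring is semilocal if it has only finitely many maximal ideals. -/
def IsSemilocal (R : Type*) [CommRing R] : Prop :=
  {M : Ideal R | M.IsMaximal}.Finite

namespace Aux


/-- finite intersections of generators form a neighborhood basis -/
theorem exists_finite_inter {X : Type*} {g : Set (Set X)} {U : Set X}
    (hU : @IsOpen X (TopologicalSpace.generateFrom g) U) {x : X} (hx : x ∈ U) :
    ∃ t : Set (Set X), t.Finite ∧ t ⊆ g ∧ x ∈ ⋂₀ t ∧ ⋂₀ t ⊆ U := by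
  induction hU with
  | basic s hs => exact ⟨{s}, finite_singleton s, by simpa using hs, by simpa using hx, by simp⟩
  | univ => exact ⟨∅, finite_empty, empty_subset _, by simp, by simp⟩
  | inter u v hu hv ihu ihv =>
    obtain ⟨t₁, h₁f, h₁g, h₁x, h₁s⟩ := ihu hx.1
    obtain ⟨t₂, h₂f, h₂g, h₂x, h₂s⟩ := ihv hx.2
    refine ⟨t₁ ∪ t₂, h₁f.union h₂f, union_subset h₁g h₂g, ?_, ?_⟩
    · rw [sInter_union]; exact ⟨h₁x, h₂x⟩
    · rw [sInter_union]; exact fun y hy => ⟨h₁s hy.1, h₂s hy.2⟩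
  | sUnion S hS ih =>
    obtain ⟨s, hsS, hxs⟩ := hx
    obtain ⟨t, htf, htg, htx, hts⟩ := ih s hsS hxs
    exact ⟨t, htf, htg, htx, hts.trans (subset_sUnion_of_mem hsS)⟩

variable {D K : Type*} [CommSemiring D] [CommSemiring K] [Algebra D K]

/-- The basic Zariski-open set `B(F)`. -/
def BB (D : Type*) {K : Type*} [CommSemiring D] [CommSemiring K] [Algebra D K] (F : Set K) :
    Set (Subalgebra D K) := {R : Subalgebra D K | F ⊆ (R : Set K)}

theorem isOpen_BB {F : Set K} (hF : F.Finite) : @IsOpen _ (zarOverTop D K) (BB D F) :=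
  TopologicalSpace.isOpen_generateFrom_of_mem ⟨F, hF, rfl⟩

theorem zar_mem_basic {U : Set (Subalgebra D K)} (hU : @IsOpen _ (zarOverTop D K) U)
    {R : Subalgebra D K} (hR : R ∈ U) :
    ∃ F : Set K, F.Finite ∧ F ⊆ (R : Set K) ∧ BB D F ⊆ U := by
  induction hU with
  | basic s hs =>
    obtain ⟨F, hF, rfl⟩ := hs
    exact ⟨F, hF, hR, fun A hA => hA⟩
  | univ => exact ⟨∅, finite_empty, empty_subset _, subset_univ _⟩
  | inter u v hu hv ihu ihv =>
    obtain ⟨F₁, h₁f, h₁R, h₁s⟩ := ihu hR.1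
    obtain ⟨F₂, h₂f, h₂R, h₂s⟩ := ihv hR.2
    refine ⟨F₁ ∪ F₂, h₁f.union h₂f, union_subset h₁R h₂R, fun A hA => ?_⟩
    rw [BB, mem_setOf_eq, union_subset_iff] at hA
    exact ⟨h₁s hA.1, h₂s hA.2⟩
  | sUnion S hS ih =>
    obtain ⟨s, hsS, hxs⟩ := hR
    obtain ⟨F, h⟩ := ih s hsS hxs
    exact ⟨F, h.1, h.2.1, h.2.2.trans (subset_sUnion_of_mem hsS)⟩

theorem isCompact_BB {F : Set K} (hF : F.Finite) : @IsCompact _ (zarOverTop D K) (BB D F) := by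
  letI := zarOverTop D K
  refine isCompact_of_finite_subcover fun {ι} Us hUs hcover => ?_
  have hadj : Algebra.adjoin D F ∈ BB D F := Algebra.subset_adjoin
  obtain ⟨i₀, hi₀⟩ := mem_iUnion.mp (hcover hadj)
  obtain ⟨G, _, hGsub, hGU⟩ := zar_mem_basic (hUs i₀) hi₀
  refine ⟨{i₀}, fun A hA => ?_⟩
  have : G ⊆ (A : Set K) := hGsub.trans (Algebra.adjoin_le hA)
  simpa using hGU this

theorem compact_open_eq_union {W : Set (Subalgebra D K)}
    (hWc : @IsCompact _ (zarOverTop D K) W) (hWo : @IsOpen _ (zarOverTop D K) W) :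
    ∃ I : Set (Set K), I.Finite ∧ (∀ F ∈ I, F.Finite ∧ BB D F ⊆ W) ∧ W ⊆ ⋃ F ∈ I, BB D F := by
  letI := zarOverTop D K
  have h : ∀ R : W, ∃ F : Set K, F.Finite ∧ F ⊆ ((R : Subalgebra D K) : Set K) ∧ BB D F ⊆ W :=
    fun R => zar_mem_basic hWo R.2
  choose f hf₁ hf₂ hf₃ using h
  have hcover : W ⊆ ⋃ R : W, BB D (f R) := fun A hA =>
    mem_iUnion.mpr ⟨⟨A, hA⟩, hf₂ ⟨A, hA⟩⟩
  obtain ⟨t, ht⟩ := hWc.elim_finite_subcover (fun R : W => BB D (f R))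
    (fun R => isOpen_BB (hf₁ R)) hcover
  refine ⟨f '' ↑t, (t.finite_toSet.image f), ?_, ?_⟩
  · rintro F ⟨R, _, rfl⟩
    exact ⟨hf₁ R, hf₃ R⟩
  · intro A hA
    obtain ⟨R, hRt, hAR⟩ := mem_iUnion₂.mp (ht hA)
    exact mem_iUnion₂.mpr ⟨f R, ⟨R, hRt, rfl⟩, hAR⟩

theorem patch_isOpen_BB {F : Set K} (hF : F.Finite) : @IsOpen _ (patchOf (zarOverTop D K)) (BB D F) :=
  TopologicalSpace.isOpen_generateFrom_of_mem (Or.inl ⟨isCompact_BB hF, isOpen_BB hF⟩)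

theorem patch_isOpen_BB_compl {F : Set K} (hF : F.Finite) :
    @IsOpen _ (patchOf (zarOverTop D K)) (BB D F)ᶜ :=
  TopologicalSpace.isOpen_generateFrom_of_mem (Or.inr (by
    rw [compl_compl]; exact ⟨isCompact_BB hF, isOpen_BB hF⟩))


open Polynomial Finset

section BMod
variable {K : Type*} [Field K]

/-- Integrality over a subset of `K`, expressed entirely inside `K`. -/
def IntG (A : Set K) (x : K) : Prop :=
  ∃ p : K[X], p.Monic ∧ (∀ i, p.coeff i ∈ A) ∧ p.eval x = 0

theorem IntG.mono {A B : Set K} (h : A ⊆ B) {x : K} (hx : IntG A x) : IntG B x := by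
  obtain ⟨p, hm, hc, he⟩ := hx
  exact ⟨p, hm, fun i => h (hc i), he⟩

variable {D : Type*} [CommRing D] [Algebra D K]

theorem intG_of_isIntegral {R : Subalgebra D K} {x : K} (h : IsIntegral ↥R x) :
    IntG (R : Set K) x := by
  obtain ⟨p, hm, he⟩ := h
  refine ⟨p.map (algebraMap ↥R K), hm.map _, fun i => ?_, ?_⟩
  · rw [coeff_map]
    exact (p.coeff i).2
  · rw [eval_map]; exact he

/-- restrict a polynomial with coefficients in a subalgebra -/
noncomputable def rPoly (R : Subalgebra D K) (p : K[X]) (hc : ∀ i, p.coeff i ∈ R) : (↥R)[X] :=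
  ∑ i ∈ p.support, monomial i (⟨p.coeff i, hc i⟩ : ↥R)

theorem rPoly_coeff (R : Subalgebra D K) (p : K[X]) (hc : ∀ i, p.coeff i ∈ R) (n : ℕ) :
    ((rPoly R p hc).coeff n : K) = p.coeff n := by
  classical
  simp only [rPoly, finset_sum_coeff, coeff_monomial, mem_support_iff, Finset.sum_ite_eq',
    ne_eq, ite_not]
  split_ifs with h
  · rw [h]; rfl
  · rfl

theorem rPoly_map (R : Subalgebra D K) (p : K[X]) (hc : ∀ i, p.coeff i ∈ R) :
    (rPoly R p hc).map (algebraMap ↥R K) = p := by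
  ext n
  rw [coeff_map]
  exact rPoly_coeff R p hc n

theorem rPoly_monic (R : Subalgebra D K) (p : K[X]) (hc : ∀ i, p.coeff i ∈ R) (hm : p.Monic) :
    (rPoly R p hc).Monic := by
  have hsupp : (rPoly R p hc).support = p.support := by
    ext n
    simp only [mem_support_iff, not_iff_not, ne_eq]
    constructor
    · intro h
      rw [← rPoly_coeff R p hc n, h, ZeroMemClass.coe_zero]
    · intro h
      have := rPoly_coeff R p hc n
      rw [h] at this
      exact Subtype.coe_injective (by simpa using this)
  have hdeg : (rPoly R p hc).natDegree = p.natDegree := by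
    unfold natDegree degree
    rw [hsupp]
  rw [Monic, leadingCoeff, hdeg]
  apply Subtype.ext
  rw [rPoly_coeff]
  simpa using hm.coeff_natDegree

theorem isIntegral_of_intG {R : Subalgebra D K} {x : K} (h : IntG (R : Set K) x) :
    IsIntegral ↥R x := by
  obtain ⟨p, hm, hc, he⟩ := h
  refine ⟨rPoly R p hc, rPoly_monic R p hc hm, ?_⟩
  have := rPoly_map R p hc
  calc eval₂ (algebraMap ↥R K) x (rPoly R p hc)
      = eval x ((rPoly R p hc).map (algebraMap ↥R K)) := (eval_map _ _).symm
    _ = 0 := by rw [this]; exact he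

/-- Valuation subrings are integrally closed (elementary form). -/
theorem ValuationSubring.mem_of_intG (V : ValuationSubring K) {x : K}
    (h : IntG (V : Set K) x) : x ∈ V := by
  rcases V.mem_or_inv_mem x with hx | hinv
  · exact hx
  rcases eq_or_ne x 0 with rfl | hx0
  · exact V.zero_mem
  obtain ⟨p, hm, hc, he⟩ := h
  set n := p.natDegree with hn
  have hn1 : 1 ≤ n := by
    by_contra hlt
    push_neg at hlt
    interval_cases n
    · have : p = 1 := hm.natDegree_eq_zero.mp hn.symm
      rw [this] at he; simp at he
  have heval : p.eval x = ∑ i ∈ Finset.range (p.natDegree + 1), p.coeff i * x ^ i :=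
    eval_eq_sum_range x
  rw [Finset.sum_range_succ, hm.coeff_natDegree, one_mul, ← hn] at heval
  have hxn : x ^ n = -∑ i ∈ Finset.range n, p.coeff i * x ^ i := by
    rw [he] at heval
    linear_combination -heval
  have hxx : x = x ^ n * (x⁻¹) ^ (n - 1) := by
    rw [inv_pow, eq_comm, mul_inv_eq_iff_eq_mul₀ (pow_ne_zero _ hx0), ← pow_succ',
      Nat.sub_add_cancel hn1]
  have hterm : ∀ i, i < n → x ^ i * (x⁻¹) ^ (n - 1) = (x⁻¹) ^ (n - 1 - i) := by
    intro i hi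
    have hi' : i ≤ n - 1 := Nat.le_sub_one_of_lt hi
    have hsplit : (n - 1) = i + (n - 1 - i) := (Nat.add_sub_cancel' hi').symm
    conv_lhs => rw [hsplit]
    rw [pow_add, ← mul_assoc, ← mul_pow, mul_inv_cancel₀ hx0, one_pow, one_mul]
  have hfin : x = ∑ i ∈ Finset.range n, -(p.coeff i) * (x⁻¹) ^ (n - 1 - i) := by
    calc x = x ^ n * (x⁻¹) ^ (n - 1) := hxx
      _ = (-∑ i ∈ Finset.range n, p.coeff i * x ^ i) * (x⁻¹) ^ (n - 1) := by rw [← hxn]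
      _ = ∑ i ∈ Finset.range n, -(p.coeff i) * (x⁻¹) ^ (n - 1 - i) := by
          rw [neg_mul, Finset.sum_mul, ← Finset.sum_neg_distrib]
          refine Finset.sum_congr rfl fun i hi => ?_
          rw [mul_assoc, hterm i (Finset.mem_range.mp hi), neg_mul]
  rw [hfin]
  exact sum_mem fun i _ => mul_mem (neg_mem (hc i)) (pow_mem hinv _)


end BMod

section CMod
variable {D K : Type*} [CommRing D] [IsDomain D] [Field K] [Algebra D K] [IsFractionRing D K]

theorem overring_isFractionRing (R : Subalgebra D K) : IsFractionRing ↥R K := by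
  refine ⟨⟨?_, ?_, ?_⟩⟩
  · rintro ⟨y, hy⟩
    have hy0 : (y : K) ≠ 0 := by
      simp only [ne_eq, ZeroMemClass.coe_eq_zero]
      exact nonZeroDivisors.ne_zero hy
    exact (isUnit_iff_ne_zero).mpr hy0
  · intro z
    obtain ⟨⟨a, b⟩, hab⟩ := IsLocalization.surj (nonZeroDivisors D) z
    have hb0 : (algebraMap D K) b ≠ 0 :=
      IsFractionRing.to_map_ne_zero_of_mem_nonZeroDivisors b.2
    refine ⟨⟨⟨algebraMap D K a, R.algebraMap_mem a⟩,
      ⟨⟨algebraMap D K b, R.algebraMap_mem b⟩, ?_⟩⟩, ?_⟩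
    · refine mem_nonZeroDivisors_of_ne_zero ?_
      simp only [ne_eq, Subtype.ext_iff]
      simpa using hb0
    · simpa using hab
  · intro x y h
    have hxy : (x : K) = y := h
    refine ⟨1, ?_⟩
    simp only [OneMemClass.coe_one, one_mul]
    exact Subtype.ext hxy

theorem ic_of_intG (R : Subalgebra D K) (h : ∀ x : K, IntG (R : Set K) x → x ∈ R) :
    IsIntegrallyClosed ↥R := by
  have := overring_isFractionRing R
  rw [isIntegrallyClosed_iff K]
  intro x hx
  exact ⟨⟨x, h x (intG_of_isIntegral hx)⟩, rfl⟩

theorem intG_mem_of_ic (R : Subalgebra D K) (hR : IsIntegrallyClosed ↥R) {x : K}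
    (h : IntG (R : Set K) x) : x ∈ R := by
  have := overring_isFractionRing R
  obtain ⟨y, hy⟩ := (isIntegrallyClosed_iff K).mp hR (isIntegral_of_intG h)
  have : (y : K) = x := hy
  exact this ▸ y.2


end CMod

section Gamma
variable {Γ : Type*} [LinearOrderedCommGroupWithZero Γ]

theorem g_mul_lt_one {a b : Γ} (ha : a ≤ 1) (hb : b < 1) : a * b < 1 := by
  have := mul_lt_one_of_nonneg_of_lt_one_right ha zero_le' hb
  simpa using this

theorem g_one_lt_mul {a b : Γ} (ha : 1 < a) (hb : 1 ≤ b) : 1 < a * b := by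
  have hb0 : b ≠ 0 := (lt_of_lt_of_le zero_lt_one hb).ne'
  have : (1:Γ) * 1 < b * a := by rw [one_mul]; exact one_lt_mul_of_le_of_lt hb ha
  rw [one_mul] at this
  exact lt_of_lt_of_le (by simpa using this) (le_of_eq (mul_comm _ _))

theorem g_pow_le_one {a : Γ} (ha : a ≤ 1) (n : ℕ) : a ^ n ≤ 1 := by
  induction n with
  | zero => simp
  | succ m ih => rw [pow_succ]; exact le_trans (mul_le_mul' ih ha) (by simp)

theorem g_one_le_pow {a : Γ} (ha : 1 ≤ a) (n : ℕ) : 1 ≤ a ^ n := by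
  induction n with
  | zero => simp
  | succ m ih => rw [pow_succ]; calc (1:Γ) = 1 * 1 := (one_mul 1).symm
                                    _ ≤ a ^ m * a := mul_le_mul' ih ha

theorem g_pow_lt_one {a : Γ} (ha : a < 1) {n : ℕ} (hn : n ≠ 0) : a ^ n < 1 := by
  obtain ⟨m, rfl⟩ := Nat.exists_eq_succ_of_ne_zero hn
  rw [pow_succ]
  exact g_mul_lt_one (g_pow_le_one ha.le m) ha

theorem g_one_lt_pow {a : Γ} (ha : 1 < a) {n : ℕ} (hn : n ≠ 0) : 1 < a ^ n := by
  obtain ⟨m, rfl⟩ := Nat.exists_eq_succ_of_ne_zero hn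
  rw [pow_succ]
  rw [mul_comm]
  exact g_one_lt_mul ha (g_one_le_pow ha.le m)

theorem g_inv_lt_one {a : Γ} (ha : 1 < a) : a⁻¹ < 1 := by
  have ha0 : a ≠ 0 := (zero_lt_one.trans ha).ne'
  by_contra h
  push_neg at h
  have := mul_le_mul_right h a
  rw [mul_one, mul_inv_cancel₀ ha0] at this
  exact absurd ha (not_lt.mpr this)

theorem g_one_le_inv {a : Γ} (ha : a ≤ 1) (ha0 : a ≠ 0) : 1 ≤ a⁻¹ := by
  by_contra h
  push_neg at h
  have := g_mul_lt_one ha h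
  rw [mul_inv_cancel₀ ha0] at this
  exact lt_irrefl 1 this

theorem g_pow_eq_one {a : Γ} (h0 : a ≠ 0) (h1 : a ≠ 1) {n : ℕ} (hn : n ≠ 0) : a ^ n ≠ 1 := by
  rcases lt_or_gt_of_ne h1 with h | h
  · exact (g_pow_lt_one h hn).ne
  · exact (g_one_lt_pow h hn).ne'

theorem g_pow_inj {a : Γ} (h0 : a ≠ 0) (h1 : a ≠ 1) {m k : ℕ} (h : a ^ m = a ^ k) : m = k := by
  rcases lt_trichotomy m k with hmk | hmk | hmk
  · exfalso
    have : a ^ m * a ^ (k - m) = a ^ m * 1 := by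
      rw [← pow_add, Nat.add_sub_cancel' hmk.le, mul_one, h]
    have h2 := mul_left_cancel₀ (pow_ne_zero m h0) this
    exact g_pow_eq_one h0 h1 (Nat.sub_ne_zero_of_lt hmk) h2
  · exact hmk
  · exfalso
    have : a ^ k * a ^ (m - k) = a ^ k * 1 := by
      rw [← pow_add, Nat.add_sub_cancel' hmk.le, mul_one, ← h]
    have h2 := mul_left_cancel₀ (pow_ne_zero k h0) this
    exact g_pow_eq_one h0 h1 (Nat.sub_ne_zero_of_lt hmk) h2

end Gamma

section Val
open scoped Classical
variable {K : Type*} [Field K]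

theorem val_lt_iff_not_mem {V : ValuationSubring K} {x : K} : 1 < V.valuation x ↔ x ∉ V := by
  rw [← V.valuation_le_one_iff x, not_le]

theorem val_ne_zero_of_not_mem {V W : ValuationSubring K} {x : K} (h : x ∉ W) :
    V.valuation x ≠ 0 := by
  rw [Valuation.ne_zero_iff]
  rintro rfl
  exact h (zero_mem W)

theorem exists_pair (V W : ValuationSubring K) (hVW : ¬ V ≤ W) (hWV : ¬ W ≤ V) :
    ∃ z : K, V.valuation z < 1 ∧ 1 < W.valuation z := by
  obtain ⟨a, haW, haV⟩ := SetLike.not_le_iff_exists.mp hWV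
  obtain ⟨b, hbV, hbW⟩ := SetLike.not_le_iff_exists.mp hVW
  refine ⟨b * a⁻¹, ?_, ?_⟩
  · rw [map_mul, Valuation.map_inv]
    exact g_mul_lt_one (V.valuation_le_one_iff b |>.mpr hbV) (g_inv_lt_one (val_lt_iff_not_mem.mpr haV))
  · rw [map_mul, Valuation.map_inv]
    exact g_one_lt_mul (val_lt_iff_not_mem.mpr hbW)
      (g_one_le_inv (W.valuation_le_one_iff a |>.mpr haW) (val_ne_zero_of_not_mem (V := W) haV))

theorem exists_sprime (V₀ : ValuationSubring K) (s : Finset (ValuationSubring K))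
    (hV₀ : V₀ ∉ s)
    (hinc : ∀ U ∈ insert V₀ s, ∀ W ∈ insert V₀ s, U ≠ W → ¬ U ≤ W) :
    ∃ z : K, V₀.valuation z < 1 ∧ ∀ W ∈ s, 1 < W.valuation z := by
  classical
  revert hV₀ hinc
  induction s using Finset.induction_on with
  | empty => exact fun _ _ => ⟨0, by rw [map_zero]; exact zero_lt_one, by simp⟩
  | @insert W₀ t hW₀t ih =>
    intro hV₀ hinc
    have hV₀W₀ : V₀ ≠ W₀ := fun h => hV₀ (h ▸ mem_insert_self W₀ t)
    have hV₀t : V₀ ∉ t := fun h => hV₀ (mem_insert_of_mem h)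
    have hsub : insert V₀ t ⊆ insert V₀ (insert W₀ t) := by
      intro U hU
      rcases mem_insert.mp hU with h | h
      · exact h ▸ mem_insert_self _ _
      · exact mem_insert_of_mem (mem_insert_of_mem h)
    obtain ⟨z, hz0, hzW⟩ := ih hV₀t (fun U hU W hW => hinc U (hsub hU) W (hsub hW))

    have hmemV₀ : V₀ ∈ insert V₀ (insert W₀ t) := mem_insert_self _ _
    have hmemW₀ : W₀ ∈ insert V₀ (insert W₀ t) := mem_insert_of_mem (mem_insert_self _ _)
    obtain ⟨y, hy0, hyW₀⟩ := exists_pair V₀ W₀ (hinc V₀ hmemV₀ W₀ hmemW₀ hV₀W₀)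
      (hinc W₀ hmemW₀ V₀ hmemV₀ (Ne.symm hV₀W₀))
    have hy_ne : ∀ W : ValuationSubring K, W.valuation y ≠ 0 := by
      intro W
      rw [Valuation.ne_zero_iff]
      rintro rfl
      rw [map_zero] at hyW₀
      exact absurd hyW₀ (not_lt.mpr zero_le_one)
    -- choose a good exponent k
    have hgood : ∃ k ∈ Finset.Icc 1 (t.card + 2),
        ∀ W ∈ insert W₀ t, (W.valuation z) ^ k ≠ W.valuation y := by
      by_contra hbad
      push_neg at hbad
      choose F hF1 hF2 using hbad
      have hF' : ∀ k, ∃ W, W ∈ insert W₀ t ∧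
          (k ∈ Finset.Icc 1 (t.card + 2) → (W.valuation z) ^ k = W.valuation y) := by
        intro k
        by_cases hk : k ∈ Finset.Icc 1 (t.card + 2)
        · exact ⟨F k hk, hF1 k hk, fun _ => hF2 k hk⟩
        · exact ⟨W₀, Finset.mem_insert_self _ _, fun h => absurd h hk⟩
      choose G hG1 hG2 using hF'
      have hmaps : ∀ k ∈ Finset.Icc 1 (t.card + 2), G k ∈ insert W₀ t := fun k _ => hG1 k
      have hcard : (insert W₀ t).card < (Finset.Icc 1 (t.card + 2)).card := by
        have h1 : (Finset.Icc 1 (t.card + 2)).card = t.card + 2 := by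
          rw [Nat.card_Icc]; omega
        have h2 := Finset.card_insert_le W₀ t
        omega
      obtain ⟨k₁, hk₁, k₂, hk₂, hne, heqF⟩ :=
        Finset.exists_ne_map_eq_of_card_lt_of_maps_to hcard hmaps
      have he₁ : ((G k₁).valuation z) ^ k₁ = (G k₁).valuation y := hG2 k₁ hk₁
      have he₂ : ((G k₁).valuation z) ^ k₂ = (G k₁).valuation y := by
        rw [heqF]; exact hG2 k₂ hk₂
      have hk₁0 : k₁ ≠ 0 := by have := (Finset.mem_Icc.mp hk₁).1; omega
      have hz_ne0 : (G k₁).valuation z ≠ 0 := by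
        intro h0
        rw [h0, zero_pow hk₁0] at he₁
        exact hy_ne (G k₁) he₁.symm
      have hz_ne1 : (G k₁).valuation z ≠ 1 := by
        intro h1
        rcases Finset.mem_insert.mp (hG1 k₁) with h | h
        · rw [h] at h1 he₁
          rw [h1, one_pow] at he₁
          exact hyW₀.ne he₁
        · exact (hzW (G k₁) h).ne' h1
      exact hne (g_pow_inj hz_ne0 hz_ne1 (he₁.trans he₂.symm))
    obtain ⟨k, hkIcc, hkgood⟩ := hgood
    have hk0 : k ≠ 0 := by
      have := (Finset.mem_Icc.mp hkIcc).1; omega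
    refine ⟨z ^ k + y, ?_, ?_⟩
    · calc V₀.valuation (z ^ k + y) ≤ max (V₀.valuation (z ^ k)) (V₀.valuation y) :=
            Valuation.map_add _ _ _
        _ < 1 := max_lt (by rw [map_pow]; exact g_pow_lt_one hz0 hk0) hy0
    · intro W hW
      have hdist : W.valuation (z ^ k) ≠ W.valuation y := by
        rw [map_pow]; exact hkgood W hW
      rw [Valuation.map_add_of_distinct_val _ hdist]
      rcases mem_insert.mp hW with h | h
      · subst h
        exact lt_max_of_lt_right hyW₀
      · refine lt_max_of_lt_left ?_
        rw [map_pow]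
        exact g_one_lt_pow (hzW W h) hk0

theorem exists_sepFun (s : Finset (ValuationSubring K))
    (hinc : ∀ U ∈ s, ∀ W ∈ s, U ≠ W → ¬ U ≤ W) :
    ∃ e : ValuationSubring K → K, ∀ V ∈ s,
      (∀ W ∈ s, e V ∈ W) ∧ V.valuation (e V) = 1 ∧
        ∀ W ∈ s, W ≠ V → W.valuation (e V) < 1 := by
  classical
  have h : ∀ V : ValuationSubring K, ∃ x : K, V ∈ s →
      ((∀ W ∈ s, x ∈ W) ∧ V.valuation x = 1 ∧ ∀ W ∈ s, W ≠ V → W.valuation x < 1) := by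
    intro V
    by_cases hV : V ∈ s
    · have hins : insert V (s.erase V) = s := Finset.insert_erase hV
      obtain ⟨z, hz1, hz2⟩ := exists_sprime V (s.erase V) (Finset.notMem_erase V s)
        (by rw [hins]; exact hinc)
      have hVval : V.valuation (1 + z) = 1 := by
        have h1 : V.valuation z < V.valuation 1 := by rw [map_one]; exact hz1
        have := Valuation.map_add_eq_of_lt_left V.valuation h1
        rw [map_one] at this; exact this
      have hWval : ∀ W ∈ s, W ≠ V → W.valuation (1 + z) = W.valuation z := by
        intro W hW hWV
        have hWz : 1 < W.valuation z := hz2 W (Finset.mem_erase.mpr ⟨hWV, hW⟩)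
        have h1 : W.valuation 1 < W.valuation z := by rw [map_one]; exact hWz
        exact Valuation.map_add_eq_of_lt_right W.valuation h1
      refine ⟨(1 + z)⁻¹, fun _ => ⟨?_, ?_, ?_⟩⟩
      · intro W hW
        rw [← W.valuation_le_one_iff, Valuation.map_inv]
        by_cases hWV : W = V
        · subst hWV; rw [hVval, inv_one]
        · rw [hWval W hW hWV]
          exact (g_inv_lt_one (hz2 W (Finset.mem_erase.mpr ⟨hWV, hW⟩))).le
      · rw [Valuation.map_inv, hVval, inv_one]
      · intro W hW hWV
        rw [Valuation.map_inv, hWval W hW hWV]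
        exact g_inv_lt_one (hz2 W (Finset.mem_erase.mpr ⟨hWV, hW⟩))
    · exact ⟨1, fun h => absurd h hV⟩
  choose e he using h
  exact ⟨e, fun V hV => he V hV⟩

theorem exists_unitAdj (s : Finset (ValuationSubring K))
    (hinc : ∀ U ∈ s, ∀ W ∈ s, U ≠ W → ¬ U ≤ W)
    {V₁ W₀ : ValuationSubring K} (hV₁ : V₁ ∈ s) (hW₀ : W₀ ∈ s) (hne : V₁ ≠ W₀)
    {y : K} (hy : ∀ U ∈ s.erase W₀, y ∈ U) :
    ∃ u : K, (∀ U ∈ s, u ∈ U) ∧ V₁.valuation u = 1 ∧ W₀.valuation (u * y) ≤ 1 := by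
  classical
  by_cases hyW : y ∈ W₀
  · exact ⟨1, fun U _ => one_mem U, map_one _,
      by rw [one_mul]; exact (W₀.valuation_le_one_iff y).mpr hyW⟩
  have hy0 : 1 < W₀.valuation y := val_lt_iff_not_mem.mpr hyW
  have hyne : W₀.valuation y ≠ 0 := (zero_lt_one.trans hy0).ne'
  obtain ⟨e, he⟩ := exists_sepFun s hinc
  set B := (s.erase W₀).filter (fun U => U.valuation (1 + y) < 1) with hBdef
  have hBs : B ⊆ s := (Finset.filter_subset _ _).trans (Finset.erase_subset _ _)
  set δ := ∑ U ∈ B, e U with hδdef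
  have hδmem : ∀ U ∈ s, δ ∈ U := fun U hU =>
    sum_mem fun W hW => (he W (hBs hW)).1 U hU
  have hδsmall : ∀ U ∈ s, U ∉ B → U.valuation δ < 1 := by
    intro U hU hUB
    refine Valuation.map_sum_lt _ one_ne_zero fun W hW => ?_
    exact (he W (hBs hW)).2.2 U hU (fun hEq => hUB (hEq ▸ hW))
  have hδone : ∀ U ∈ B, U.valuation δ = 1 := by
    intro U hUB
    have hUs : U ∈ s := hBs hUB
    have hrest : U.valuation (∑ W ∈ B.erase U, e W) < 1 := by
      refine Valuation.map_sum_lt _ one_ne_zero fun W hW => ?_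
      have hWB : W ∈ B := Finset.mem_of_mem_erase hW
      exact (he W (hBs hWB)).2.2 U hUs (Finset.ne_of_mem_erase hW).symm
    have hsplit : δ = e U + ∑ W ∈ B.erase U, e W := (Finset.add_sum_erase B e hUB).symm
    rw [hsplit]
    have hlt : U.valuation (∑ W ∈ B.erase U, e W) < U.valuation (e U) := by
      rw [(he U hUs).2.1]; exact hrest
    rw [Valuation.map_add_eq_of_lt_left _ hlt, (he U hUs).2.1]
  set z := 1 + y + δ with hzdef
  have hz_er : ∀ U ∈ s.erase W₀, U.valuation z = 1 := by
    intro U hU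
    have hUs : U ∈ s := Finset.mem_of_mem_erase hU
    have h1y : U.valuation (1 + y) ≤ 1 :=
      (U.valuation_le_one_iff _).mpr (add_mem (one_mem U) (hy U hU))
    by_cases hUB : U ∈ B
    · have hlt : U.valuation (1 + y) < U.valuation δ := by
        rw [hδone U hUB]
        exact (Finset.mem_filter.mp hUB).2
      rw [hzdef, Valuation.map_add_eq_of_lt_right _ hlt, hδone U hUB]
    · have h1y' : U.valuation (1 + y) = 1 := by
        refine le_antisymm h1y ?_
        by_contra hc
        push_neg at hc
        exact hUB (Finset.mem_filter.mpr ⟨hU, hc⟩)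
      have hlt : U.valuation δ < U.valuation (1 + y) := by
        rw [h1y']; exact hδsmall U hUs hUB
      rw [hzdef, Valuation.map_add_eq_of_lt_left _ hlt, h1y']
  have hzW₀ : W₀.valuation z = W₀.valuation y := by
    have hmem : (1 : K) + δ ∈ W₀ := add_mem (one_mem W₀) (hδmem W₀ hW₀)
    have hlt : W₀.valuation (1 + δ) < W₀.valuation y :=
      lt_of_le_of_lt ((W₀.valuation_le_one_iff _).mpr hmem) hy0
    have hzeq : z = y + (1 + δ) := by rw [hzdef]; ring
    rw [hzeq, Valuation.map_add_eq_of_lt_left _ hlt]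
  refine ⟨z⁻¹, ?_, ?_, ?_⟩
  · intro U hU
    rw [← U.valuation_le_one_iff, Valuation.map_inv]
    by_cases hUW : U = W₀
    · subst hUW
      rw [hzW₀]
      exact (g_inv_lt_one hy0).le
    · rw [hz_er U (Finset.mem_erase.mpr ⟨hUW, hU⟩), inv_one]
  · rw [Valuation.map_inv, hz_er V₁ (Finset.mem_erase.mpr ⟨hne, hV₁⟩), inv_one]
  · rw [map_mul, Valuation.map_inv, hzW₀, inv_mul_cancel₀ hyne]

theorem exists_mult_aux (V₁ : ValuationSubring K) (s' : Finset (ValuationSubring K)) :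
    V₁ ∉ s' →
    (∀ U ∈ insert V₁ s', ∀ W ∈ insert V₁ s', U ≠ W → ¬ U ≤ W) →
    ∀ x : K, V₁.valuation x ≤ 1 →
    ∃ t : K, (∀ U ∈ insert V₁ s', t ∈ U ∧ t * x ∈ U) ∧ V₁.valuation t = 1 := by
  classical
  induction s' using Finset.induction_on with
  | empty =>
    intro _ _ x hx
    refine ⟨1, fun U hU => ?_, map_one _⟩
    rcases Finset.mem_insert.mp hU with h | h
    · subst h
      exact ⟨one_mem U, by rw [one_mul]; exact (U.valuation_le_one_iff x).mp hx⟩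
    · exact absurd h (Finset.notMem_empty U)
  | @insert W₀ t' hW₀t' ih =>
    intro hV₁ hinc x hx
    have hV₁W₀ : V₁ ≠ W₀ := fun h => hV₁ (h ▸ Finset.mem_insert_self W₀ t')
    have hV₁t' : V₁ ∉ t' := fun h => hV₁ (Finset.mem_insert_of_mem h)
    have hsub : insert V₁ t' ⊆ insert V₁ (insert W₀ t') := by
      intro U hU
      rcases Finset.mem_insert.mp hU with h | h
      · exact h ▸ Finset.mem_insert_self _ _
      · exact Finset.mem_insert_of_mem (Finset.mem_insert_of_mem h)
    obtain ⟨t₀, ht₀, ht₀v⟩ := ih hV₁t' (fun U hU W hW => hinc U (hsub hU) W (hsub hW)) x hx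
    have hV₁S : V₁ ∈ insert V₁ (insert W₀ t') := Finset.mem_insert_self _ _
    have hW₀S : W₀ ∈ insert V₁ (insert W₀ t') :=
      Finset.mem_insert_of_mem (Finset.mem_insert_self _ _)
    have hSer : (insert V₁ (insert W₀ t')).erase W₀ = insert V₁ t' := by
      rw [Finset.erase_insert_of_ne hV₁W₀, Finset.erase_insert hW₀t']
    obtain ⟨u₁, hu₁mem, hu₁v, hu₁W₀⟩ := exists_unitAdj (insert V₁ (insert W₀ t')) hinc hV₁S hW₀S
      hV₁W₀ (y := t₀) (by rw [hSer]; exact fun U hU => (ht₀ U hU).1)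
    obtain ⟨u₂, hu₂mem, hu₂v, hu₂W₀⟩ := exists_unitAdj (insert V₁ (insert W₀ t')) hinc hV₁S hW₀S
      hV₁W₀ (y := t₀ * x) (by rw [hSer]; exact fun U hU => (ht₀ U hU).2)
    refine ⟨u₁ * u₂ * t₀, ?_, ?_⟩
    · intro U hU
      by_cases hUW₀ : U = W₀
      · subst hUW₀
        constructor
        · have h1 : u₁ * t₀ ∈ U := (U.valuation_le_one_iff _).mp hu₁W₀
          have : u₁ * u₂ * t₀ = (u₁ * t₀) * u₂ := by ring
          rw [this]
          exact mul_mem h1 (hu₂mem U hU)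
        · have h2 : u₂ * (t₀ * x) ∈ U := (U.valuation_le_one_iff _).mp hu₂W₀
          have : u₁ * u₂ * t₀ * x = (u₂ * (t₀ * x)) * u₁ := by ring
          rw [this]
          exact mul_mem h2 (hu₁mem U hU)
      · have hU' : U ∈ insert V₁ t' := by
          rw [← hSer]; exact Finset.mem_erase.mpr ⟨hUW₀, hU⟩
        constructor
        · exact mul_mem (mul_mem (hu₁mem U hU) (hu₂mem U hU)) (ht₀ U hU').1
        · have : u₁ * u₂ * t₀ * x = (u₁ * u₂) * (t₀ * x) := by ring
          rw [this]
          exact mul_mem (mul_mem (hu₁mem U hU) (hu₂mem U hU)) (ht₀ U hU').2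
    · rw [map_mul, map_mul, hu₁v, hu₂v, ht₀v, one_mul, one_mul]

theorem exists_multiplier (s : Finset (ValuationSubring K))
    (hinc : ∀ U ∈ s, ∀ W ∈ s, U ≠ W → ¬ U ≤ W)
    {V₁ : ValuationSubring K} (hV₁ : V₁ ∈ s) {x : K} (hx : V₁.valuation x ≤ 1) :
    ∃ t : K, (∀ U ∈ s, t ∈ U ∧ t * x ∈ U) ∧ V₁.valuation t = 1 := by
  classical
  have hins : insert V₁ (s.erase V₁) = s := Finset.insert_erase hV₁
  obtain ⟨t, ht, htv⟩ := exists_mult_aux V₁ (s.erase V₁) (Finset.notMem_erase V₁ s)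
    (by rw [hins]; exact hinc) x hx
  exact ⟨t, by rw [← hins]; exact ht, htv⟩

end Val

section Pack
variable {D K : Type*} [CommRing D] [Field K] [Algebra D K]

/-- the ideal of `A` of elements small at `U` -/
def MVI (A : Subalgebra D K) (U : ValuationSubring K) : Ideal ↥A where
  carrier := {r : ↥A | ∀ c : ↥A, U.valuation (↑c * ↑r) < 1}
  add_mem' := by
    intro a b ha hb
    simp only [Set.mem_setOf_eq] at *
    intro c
    have hcoe : ((a + b : ↥A) : K) = ↑a + ↑b := rfl
    rw [hcoe, mul_add]
    exact lt_of_le_of_lt (Valuation.map_add _ _ _) (max_lt (ha c) (hb c))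
  zero_mem' := by
    simp only [Set.mem_setOf_eq]
    intro c
    have hcoe : ((0 : ↥A) : K) = 0 := rfl
    rw [hcoe, mul_zero, map_zero]
    exact zero_lt_one
  smul_mem' := by
    intro c a ha
    simp only [Set.mem_setOf_eq, smul_eq_mul] at *
    intro c'
    have hcoe : ((c * a : ↥A) : K) = ↑c * ↑a := rfl
    have hcoe2 : ((c' * c : ↥A) : K) = ↑c' * ↑c := rfl
    have := ha (c' * c)
    rw [hcoe2] at this
    rw [hcoe, ← mul_assoc]
    exact this

theorem mem_MVI_iff {A : Subalgebra D K} {U : ValuationSubring K} (h : (A : Set K) ⊆ ↑U)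
    {r : ↥A} : r ∈ MVI A U ↔ U.valuation ↑r < 1 := by
  constructor
  · intro hr
    have := hr (1 : ↥A)
    rwa [OneMemClass.coe_one, one_mul] at this
  · intro hr c
    exact g_mul_lt_one ((U.valuation_le_one_iff _).mpr (h c.2)) hr

theorem MVI_ne_top (A : Subalgebra D K) (U : ValuationSubring K) : MVI A U ≠ ⊤ := by
  intro htop
  have h1 : (1 : ↥A) ∈ MVI A U := htop ▸ Submodule.mem_top
  have := h1 (1 : ↥A)
  rw [OneMemClass.coe_one, one_mul, map_one] at this
  exact lt_irrefl 1 this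

theorem MVI_prime (A : Subalgebra D K) (U : ValuationSubring K) (h : (A : Set K) ⊆ ↑U) :
    (MVI A U).IsPrime := by
  constructor
  · exact MVI_ne_top A U
  · intro a b hab
    rw [mem_MVI_iff h] at hab ⊢
    rw [mem_MVI_iff h]
    by_contra hc
    push_neg at hc
    obtain ⟨hca, hcb⟩ := hc
    have ha1 : U.valuation ↑a = 1 :=
      le_antisymm ((U.valuation_le_one_iff _).mpr (h a.2)) hca
    have hb1 : U.valuation ↑b = 1 :=
      le_antisymm ((U.valuation_le_one_iff _).mpr (h b.2)) hcb
    have hcoe : ((a * b : ↥A) : K) = ↑a * ↑b := rfl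
    rw [hcoe, map_mul, ha1, hb1, mul_one] at hab
    exact lt_irrefl 1 hab

variable (A : Subalgebra D K) (s : Finset (ValuationSubring K))

theorem maximal_eq_MVI (hmem : ∀ x : K, x ∈ A ↔ ∀ U ∈ s, x ∈ U) (hs : s.Nonempty)
    (M : Ideal ↥A) (hM : M.IsMaximal) : ∃ U ∈ s, M = MVI A U := by
  classical
  have hAU : ∀ U ∈ s, (A : Set K) ⊆ ↑U := fun U hU x hx => (hmem x).mp hx U hU
  obtain ⟨U₀, hU₀⟩ := hs
  have hsubset : (M : Set ↥A) ⊆ ⋃ U ∈ s, ((MVI A U : Ideal ↥A) : Set ↥A) := by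
    intro r hr
    have hex : ∃ U ∈ s, U.valuation ↑r < 1 := by
      by_contra hcon
      push_neg at hcon
      have hval1 : ∀ U ∈ s, U.valuation ↑r = 1 := fun U hU =>
        le_antisymm ((U.valuation_le_one_iff _).mpr (hAU U hU r.2)) (hcon U hU)
      have hr0 : (r : K) ≠ 0 := by
        intro h0
        have := hval1 U₀ hU₀
        rw [h0, map_zero] at this
        exact zero_ne_one this
      have hinv : ((r : K))⁻¹ ∈ A := (hmem _).mpr (fun U hU => by
        rw [← U.valuation_le_one_iff, Valuation.map_inv, hval1 U hU, inv_one])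
      have hunit : IsUnit r := by
        refine isUnit_iff_exists_inv.mpr ⟨⟨((r : K))⁻¹, hinv⟩, ?_⟩
        apply Subtype.ext
        have hcoe : ((r * ⟨((r : K))⁻¹, hinv⟩ : ↥A) : K) = ↑r * (↑r)⁻¹ := rfl
        rw [hcoe, mul_inv_cancel₀ hr0]
        rfl
      exact hM.ne_top (M.eq_top_of_isUnit_mem hr hunit)
    obtain ⟨U, hU, hvr⟩ := hex
    exact Set.mem_iUnion₂.mpr ⟨U, hU, (mem_MVI_iff (hAU U hU)).mpr hvr⟩
  have havoid := (Ideal.subset_union_prime U₀ U₀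
    (fun U hU _ _ => MVI_prime A U (hAU U hU))).mp hsubset
  obtain ⟨U, hUs, hle⟩ := havoid
  exact ⟨U, hUs, hM.eq_of_le (MVI_ne_top A U) hle⟩

theorem pack_semilocal (hmem : ∀ x : K, x ∈ A ↔ ∀ U ∈ s, x ∈ U) (hs : s.Nonempty) :
    IsSemilocal ↥A := by
  have hsub : {M : Ideal ↥A | M.IsMaximal} ⊆ (fun U => MVI A U) '' ↑s := by
    intro M hM
    obtain ⟨U, hU, rfl⟩ := maximal_eq_MVI A s hmem hs M hM
    exact ⟨U, hU, rfl⟩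
  exact Set.Finite.subset ((s.finite_toSet).image _) hsub

theorem pack_prufer (hmem : ∀ x : K, x ∈ A ↔ ∀ U ∈ s, x ∈ U) (hs : s.Nonempty)
    (hinc : ∀ U ∈ s, ∀ W ∈ s, U ≠ W → ¬ U ≤ W) : IsPrufer ↥A := by
  classical
  intro P hP
  haveI := hP
  obtain ⟨M, hMmax, hPM⟩ := P.exists_le_maximal hP.ne_top
  obtain ⟨V₁, hV₁s, hMeq⟩ := maximal_eq_MVI A s hmem hs M hMmax
  have hAU : ∀ U ∈ s, (A : Set K) ⊆ ↑U := fun U hU x hx => (hmem x).mp hx U hU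
  have key : ∀ r r' : ↥A, (r : K) ≠ 0 →
      V₁.valuation ((r' : K) * ((r : K))⁻¹) ≤ 1 →
      algebraMap ↥A (Localization.AtPrime P) r ∣ algebraMap ↥A (Localization.AtPrime P) r' := by
    intro r r' hr hval
    obtain ⟨t, htmem, htv⟩ := exists_multiplier s hinc hV₁s hval
    have htA : t ∈ A := (hmem t).mpr fun U hU => (htmem U hU).1
    have htxA : t * ((r' : K) * ((r : K))⁻¹) ∈ A := (hmem _).mpr fun U hU => (htmem U hU).2
    have hid : (⟨t, htA⟩ : ↥A) * r' = ⟨t * ((r' : K) * ((r : K))⁻¹), htxA⟩ * r := by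
      apply Subtype.ext
      show t * (r' : K) = t * ((r' : K) * ((r : K))⁻¹) * (r : K)
      field_simp
    have htP : (⟨t, htA⟩ : ↥A) ∈ P.primeCompl := by
      have htM : (⟨t, htA⟩ : ↥A) ∉ M := by
        rw [hMeq]
        intro hc
        rw [mem_MVI_iff (hAU V₁ hV₁s)] at hc
        rw [show ((⟨t, htA⟩ : ↥A) : K) = t from rfl, htv] at hc
        exact lt_irrefl 1 hc
      exact fun hp => htM (hPM hp)
    have hu := IsLocalization.map_units (Localization.AtPrime P)
      (⟨⟨t, htA⟩, htP⟩ : P.primeCompl)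
    have hmapid : algebraMap ↥A (Localization.AtPrime P) ⟨t, htA⟩ *
        algebraMap ↥A (Localization.AtPrime P) r' =
        algebraMap ↥A (Localization.AtPrime P) ⟨t * ((r' : K) * ((r : K))⁻¹), htxA⟩ *
        algebraMap ↥A (Localization.AtPrime P) r := by
      rw [← map_mul, ← map_mul, hid]
    refine ⟨(hu.unit⁻¹ : _) * algebraMap ↥A (Localization.AtPrime P)
      ⟨t * ((r' : K) * ((r : K))⁻¹), htxA⟩, ?_⟩
    calc algebraMap ↥A (Localization.AtPrime P) r'
        = (hu.unit⁻¹ : _) * ((hu.unit : _) * algebraMap ↥A (Localization.AtPrime P) r') := by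
          rw [← mul_assoc, Units.inv_mul, one_mul]
      _ = (hu.unit⁻¹ : _) * (algebraMap ↥A (Localization.AtPrime P) ⟨t, htA⟩ *
            algebraMap ↥A (Localization.AtPrime P) r') := by rw [IsUnit.unit_spec]
      _ = (hu.unit⁻¹ : _) * (algebraMap ↥A (Localization.AtPrime P)
            ⟨t * ((r' : K) * ((r : K))⁻¹), htxA⟩ *
            algebraMap ↥A (Localization.AtPrime P) r) := by rw [hmapid]
      _ = algebraMap ↥A (Localization.AtPrime P) r * ((hu.unit⁻¹ : _) *
            algebraMap ↥A (Localization.AtPrime P)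
            ⟨t * ((r' : K) * ((r : K))⁻¹), htxA⟩) := by ring
  intro a b
  obtain ⟨⟨ra, sa⟩, hra : IsLocalization.mk' (Localization.AtPrime P) ra sa = a⟩ := IsLocalization.mk'_surjective P.primeCompl a
  obtain ⟨⟨rb, sb⟩, hrb : IsLocalization.mk' (Localization.AtPrime P) rb sb = b⟩ := IsLocalization.mk'_surjective P.primeCompl b
  have hassa : Associated a (algebraMap ↥A (Localization.AtPrime P) ra) := by
    have hu := IsLocalization.map_units (Localization.AtPrime P) sa
    refine ⟨hu.unit, ?_⟩
    rw [IsUnit.unit_spec, ← hra, IsLocalization.mk'_spec]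
  have hassb : Associated b (algebraMap ↥A (Localization.AtPrime P) rb) := by
    have hu := IsLocalization.map_units (Localization.AtPrime P) sb
    refine ⟨hu.unit, ?_⟩
    rw [IsUnit.unit_spec, ← hrb, IsLocalization.mk'_spec]
  suffices h : algebraMap ↥A (Localization.AtPrime P) ra ∣
      algebraMap ↥A (Localization.AtPrime P) rb ∨
      algebraMap ↥A (Localization.AtPrime P) rb ∣
      algebraMap ↥A (Localization.AtPrime P) ra by
    rcases h with h | h
    · exact Or.inl ((hassa.dvd_iff_dvd_left).mpr ((hassb.dvd_iff_dvd_right).mpr h))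
    · exact Or.inr ((hassb.dvd_iff_dvd_left).mpr ((hassa.dvd_iff_dvd_right).mpr h))
  by_cases hzb : (rb : K) = 0
  · left
    have : rb = 0 := Subtype.ext hzb
    rw [this, map_zero]
    exact dvd_zero _
  by_cases hza : (ra : K) = 0
  · right
    have : ra = 0 := Subtype.ext hza
    rw [this, map_zero]
    exact dvd_zero _
  rcases le_or_gt (V₁.valuation ((rb : K) * ((ra : K))⁻¹)) 1 with hle | hgt
  · exact Or.inl (key ra rb hza hle)
  · refine Or.inr (key rb ra hzb ?_)
    have hrw : ((ra : K) * ((rb : K))⁻¹) = (((rb : K) * ((ra : K))⁻¹))⁻¹ := by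
      rw [mul_inv, inv_inv, mul_comm]
    rw [hrw]
    exact (g_inv_lt_one hgt).le

end Pack

section Main
variable {D K : Type*} [CommRing D] [IsDomain D] [Field K] [Algebra D K] [IsFractionRing D K]

theorem prufer_mem_of_intG (R : Subalgebra D K) (hpruf : IsPrufer ↥R) {x : K}
    (hx : IntG (R : Set K) x) : x ∈ R := by
  classical
  set I : Ideal ↥R :=
    { carrier := {r : ↥R | (r : K) * x ∈ R}
      add_mem' := by
        intro a b ha hb
        simp only [Set.mem_setOf_eq] at *
        have hcoe : ((a + b : ↥R) : K) = ↑a + ↑b := rfl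
        rw [hcoe, add_mul]
        exact add_mem ha hb
      zero_mem' := by
        simp only [Set.mem_setOf_eq]
        have hcoe : ((0 : ↥R) : K) = 0 := rfl
        rw [hcoe, zero_mul]
        exact zero_mem R
      smul_mem' := by
        intro c a ha
        simp only [Set.mem_setOf_eq, smul_eq_mul] at *
        have hcoe : ((c * a : ↥R) : K) = ↑c * ↑a := rfl
        rw [hcoe, mul_assoc]
        exact mul_mem c.2 ha } with hIdef
  have hI : I = ⊤ := by
    by_contra hIne
    obtain ⟨M, hMmax, hIM⟩ := I.exists_le_maximal hIne
    haveI := hMmax.isPrime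
    have h1M : (1 : ↥R) ∉ M := fun h => hMmax.ne_top ((Ideal.eq_top_iff_one M).mpr h)
    -- the localization of R at M, as a subring of K
    set W : Subring K :=
      { carrier := {z : K | ∃ (r : ↥R) (s : ↥R), s ∉ M ∧ (s : K) * z = r}
        one_mem' := ⟨1, 1, h1M, by simp⟩
        zero_mem' := ⟨0, 1, h1M, by simp⟩
        mul_mem' := by
          rintro a b ⟨r1, s1, hs1, he1⟩ ⟨r2, s2, hs2, he2⟩
          refine ⟨r1 * r2, s1 * s2, fun h => ?_, ?_⟩
          · rcases hMmax.isPrime.mem_or_mem h with h | h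
            exacts [hs1 h, hs2 h]
          · have hcoe : ((s1 * s2 : ↥R) : K) = ↑s1 * ↑s2 := rfl
            have hcoe2 : ((r1 * r2 : ↥R) : K) = ↑r1 * ↑r2 := rfl
            rw [hcoe, hcoe2, ← he1, ← he2]; ring
        add_mem' := by
          rintro a b ⟨r1, s1, hs1, he1⟩ ⟨r2, s2, hs2, he2⟩
          refine ⟨r1 * s2 + r2 * s1, s1 * s2, fun h => ?_, ?_⟩
          · rcases hMmax.isPrime.mem_or_mem h with h | h
            exacts [hs1 h, hs2 h]
          · have hcoe : ((s1 * s2 : ↥R) : K) = ↑s1 * ↑s2 := rfl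
            have hcoe2 : ((r1 * s2 + r2 * s1 : ↥R) : K) = ↑r1 * ↑s2 + ↑r2 * ↑s1 := rfl
            rw [hcoe, hcoe2, ← he1, ← he2]; ring
        neg_mem' := by
          rintro a ⟨r, s, hs, he⟩
          refine ⟨-r, s, hs, ?_⟩
          have hcoe : ((-r : ↥R) : K) = -↑r := rfl
          rw [hcoe, ← he]; ring } with hWdef
    have hmemW : ∀ z : K, (∃ (r : ↥R) (s : ↥R), s ∉ M ∧ (s : K) * z = r) → z ∈ W :=
      fun z h => h
    have hWor : ∀ z : K, z ∈ W ∨ z⁻¹ ∈ W := by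
      intro z
      rcases eq_or_ne z 0 with rfl | hz0
      · exact Or.inl (zero_mem W)
      obtain ⟨p, q, hq0, hzeq⟩ : ∃ c d : ↥R, (d : K) ≠ 0 ∧ (d : K) * z = c := by
        obtain ⟨⟨nn, dd⟩, hnd⟩ := IsLocalization.surj (nonZeroDivisors D) z
        exact ⟨⟨algebraMap D K nn, R.algebraMap_mem nn⟩,
          ⟨algebraMap D K dd, R.algebraMap_mem dd⟩,
          IsFractionRing.to_map_ne_zero_of_mem_nonZeroDivisors dd.2,
          by rw [mul_comm]; exact hnd⟩
      have hp0 : (p : K) ≠ 0 := by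
        intro h0
        rw [h0] at hzeq
        rcases mul_eq_zero.mp hzeq with h | h
        exacts [hq0 h, hz0 h]
      rcases hpruf M hMmax.isPrime (algebraMap ↥R (Localization.AtPrime M) q)
        (algebraMap ↥R (Localization.AtPrime M) p) with hdvd | hdvd
      · -- q ∣ p : z ∈ W
        obtain ⟨w, hw⟩ := hdvd
        obtain ⟨⟨r, sden⟩, hrs : IsLocalization.mk' (Localization.AtPrime M) r sden = w⟩ := IsLocalization.mk'_surjective M.primeCompl w
        have heq : algebraMap ↥R (Localization.AtPrime M) (p * sden) =
            algebraMap ↥R (Localization.AtPrime M) (q * r) := by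
          rw [map_mul, map_mul, hw, ← hrs, mul_assoc, IsLocalization.mk'_spec]
        obtain ⟨u, hu⟩ := (IsLocalization.eq_iff_exists M.primeCompl _).mp heq
        refine Or.inl (hmemW z ⟨(u : ↥R) * r, (u : ↥R) * (sden : ↥R), fun h => ?_, ?_⟩)
        · rcases hMmax.isPrime.mem_or_mem h with h | h
          exacts [u.2 h, (sden.2 : (sden : ↥R) ∉ M) h]
        · -- (u*sden) * z = u * r, using q * z = p and q ≠ 0
          have hK : ((u : ↥R) : K) * (sden : ↥R) * (p : K) =
              ((u : ↥R) : K) * (q : K) * (r : K) := by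
            have := congrArg (fun t : ↥R => (t : K)) hu
            simpa [mul_assoc, mul_comm, mul_left_comm] using this
          have hcoe : (((u : ↥R) * (sden : ↥R) : ↥R) : K) = ↑(u : ↥R) * ↑(sden : ↥R) := rfl
          have hcoe2 : (((u : ↥R) * r : ↥R) : K) = ↑(u : ↥R) * ↑r := rfl
          rw [hcoe, hcoe2]
          have hq : (q : K) * z = p := hzeq
          apply mul_left_cancel₀ hq0
          calc (q:K) * (↑(u : ↥R) * ↑(sden : ↥R) * z)
              = ↑(u : ↥R) * ↑(sden : ↥R) * ((q:K) * z) := by ring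
            _ = ↑(u : ↥R) * ↑(sden : ↥R) * (p : K) := by rw [hq]
            _ = ↑(u : ↥R) * (q : K) * (r : K) := hK
            _ = (q:K) * (↑(u : ↥R) * ↑r) := by ring
      · -- p ∣ q : z⁻¹ ∈ W
        obtain ⟨w, hw⟩ := hdvd
        obtain ⟨⟨r, sden⟩, hrs : IsLocalization.mk' (Localization.AtPrime M) r sden = w⟩ := IsLocalization.mk'_surjective M.primeCompl w
        have heq : algebraMap ↥R (Localization.AtPrime M) (q * sden) =
            algebraMap ↥R (Localization.AtPrime M) (p * r) := by
          rw [map_mul, map_mul, hw, ← hrs, mul_assoc, IsLocalization.mk'_spec]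
        obtain ⟨u, hu⟩ := (IsLocalization.eq_iff_exists M.primeCompl _).mp heq
        refine Or.inr (hmemW z⁻¹ ⟨(u : ↥R) * r, (u : ↥R) * (sden : ↥R), fun h => ?_, ?_⟩)
        · rcases hMmax.isPrime.mem_or_mem h with h | h
          exacts [u.2 h, (sden.2 : (sden : ↥R) ∉ M) h]
        · have hK : ((u : ↥R) : K) * (sden : ↥R) * (q : K) =
              ((u : ↥R) : K) * (p : K) * (r : K) := by
            have := congrArg (fun t : ↥R => (t : K)) hu
            simpa [mul_assoc, mul_comm, mul_left_comm] using this
          have hcoe : (((u : ↥R) * (sden : ↥R) : ↥R) : K) = ↑(u : ↥R) * ↑(sden : ↥R) := rfl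
          have hcoe2 : (((u : ↥R) * r : ↥R) : K) = ↑(u : ↥R) * ↑r := rfl
          rw [hcoe, hcoe2]
          have hq : (q : K) * z = p := hzeq
          have hpz : (p : K) * z⁻¹ = q := by
            rw [← hq]
            field_simp
          apply mul_left_cancel₀ hp0
          calc (p:K) * (↑(u : ↥R) * ↑(sden : ↥R) * z⁻¹)
              = ↑(u : ↥R) * ↑(sden : ↥R) * ((p:K) * z⁻¹) := by ring
            _ = ↑(u : ↥R) * ↑(sden : ↥R) * (q : K) := by rw [hpz]
            _ = ↑(u : ↥R) * (p : K) * (r : K) := hK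
            _ = (p:K) * (↑(u : ↥R) * ↑r) := by ring
    set V : ValuationSubring K := ⟨W, hWor⟩ with hVdef
    have hRW : (R : Set K) ⊆ (V : Set K) := by
      intro r hr
      exact hmemW r ⟨⟨r, hr⟩, 1, h1M, by simp⟩
    have hxV : x ∈ V := ValuationSubring.mem_of_intG V (hx.mono hRW)
    obtain ⟨r, s, hsM, hse⟩ := hxV
    have hsI : s ∈ I := by
      show (s : K) * x ∈ R
      rw [hse]
      exact r.2
    exact hsM (hIM hsI)
  have h1I : (1 : ↥R) ∈ I := hI ▸ Submodule.mem_top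
  have : ((1 : ↥R) : K) * x ∈ R := h1I
  rwa [OneMemClass.coe_one, one_mul] at this

theorem exists_val_overring (R : Subalgebra D K)
    (hIC : ∀ z : K, IntG (R : Set K) z → z ∈ R) {y : K} (hy : y ∉ R) :
    ∃ V : ValuationSubring K, (R : Set K) ⊆ ↑V ∧ y ∉ V := by
  classical
  have hy0 : y ≠ 0 := fun h => hy (h ▸ zero_mem R)
  set SA : Subalgebra ↥R K := Algebra.adjoin ↥R {y⁻¹} with hSAdef
  set S : Subring K := SA.toSubring with hSdef
  have hRS : (R : Set K) ⊆ ↑S := by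
    intro r hr
    have : algebraMap ↥R K ⟨r, hr⟩ ∈ SA := Subalgebra.algebraMap_mem SA ⟨r, hr⟩
    exact this
  have hyinvS : y⁻¹ ∈ S := Algebra.self_mem_adjoin_singleton ↥R y⁻¹
  have hynotS : y ∉ S := by
    intro hyS
    have hySA : y ∈ SA := hyS
    rw [hSAdef, Algebra.adjoin_singleton_eq_range_aeval] at hySA
    obtain ⟨p, hp⟩ := hySA
    apply hy
    apply hIC
    set n := p.natDegree with hndef
    refine ⟨Polynomial.X ^ (n + 1) -
      ∑ i ∈ Finset.range (n + 1), Polynomial.C ((p.coeff i : K)) * Polynomial.X ^ (n - i),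
      ?_, ?_, ?_⟩
    · apply Polynomial.monic_X_pow_sub
      refine lt_of_le_of_lt (Polynomial.degree_sum_le (Finset.range (n + 1))
        (fun i => Polynomial.C ((p.coeff i : K)) * Polynomial.X ^ (n - i))) ?_
      refine lt_of_le_of_lt (Finset.sup_le fun i _ => le_trans
        (Polynomial.degree_C_mul_X_pow_le _ _)
        (by exact_mod_cast Nat.sub_le n i :
          ((n - i : ℕ) : WithBot ℕ) ≤ (n : WithBot ℕ))) ?_
      exact_mod_cast Nat.lt_succ_self n
    · intro j
      rw [Polynomial.coeff_sub, Polynomial.coeff_X_pow, Polynomial.finset_sum_coeff]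
      refine sub_mem ?_ (sum_mem fun i _ => ?_)
      · split_ifs
        exacts [one_mem R, zero_mem R]
      · rw [Polynomial.coeff_C_mul, Polynomial.coeff_X_pow]
        split_ifs with h
        · rw [mul_one]; exact (p.coeff i).2
        · rw [mul_zero]; exact zero_mem R
    · rw [Polynomial.eval_sub, Polynomial.eval_pow, Polynomial.eval_X,
        Polynomial.eval_finset_sum]
      have hterm : ∀ i ∈ Finset.range (n + 1),
          Polynomial.eval y (Polynomial.C ((p.coeff i : K)) * Polynomial.X ^ (n - i)) =
            (p.coeff i : K) * (y⁻¹) ^ i * y ^ n := by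
        intro i hi
        rw [Polynomial.eval_mul, Polynomial.eval_C, Polynomial.eval_pow, Polynomial.eval_X]
        have hin : i ≤ n := Nat.lt_succ_iff.mp (Finset.mem_range.mp hi)
        have : y ^ (n - i) = (y⁻¹) ^ i * y ^ n := by
          rw [pow_sub₀ y hy0 hin, ← inv_pow, mul_comm]
        rw [this, mul_assoc]
      rw [Finset.sum_congr rfl hterm]
      have hsum : ∑ i ∈ Finset.range (n + 1), (p.coeff i : K) * (y⁻¹) ^ i = y := by
        have haev : Polynomial.eval₂ (algebraMap ↥R K) y⁻¹ p = y := by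
          rw [← Polynomial.aeval_def]; exact hp
        rw [Polynomial.eval₂_eq_sum_range] at haev
        exact haev
      rw [← Finset.sum_mul, hsum, ← pow_succ']
      ring
  -- y⁻¹ generates a proper ideal of S
  set J : Ideal ↥S := Ideal.span {(⟨y⁻¹, hyinvS⟩ : ↥S)} with hJdef
  have hJne : J ≠ ⊤ := by
    intro htop
    have hunit : IsUnit (⟨y⁻¹, hyinvS⟩ : ↥S) := (Ideal.span_singleton_eq_top).mp htop
    obtain ⟨w, hw⟩ := isUnit_iff_exists_inv.mp hunit
    have hwK : (w : K) * y⁻¹ = 1 := by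
      have := congrArg (fun t : ↥S => (t : K)) hw
      simpa [mul_comm] using this
    have : (w : K) = y := by
      field_simp at hwK
      exact hwK
    exact hynotS (this ▸ w.2)
  obtain ⟨Mx, hMxmax, hJMx⟩ := J.exists_le_maximal hJne
  haveI := hMxmax.isPrime
  obtain ⟨B, hB⟩ := LocalSubring.exists_le_valuationSubring (LocalSubring.ofPrime S Mx)
  obtain ⟨hle, hloc⟩ := hB
  refine ⟨B, ?_, ?_⟩
  · intro r hr
    exact hle (LocalSubring.le_ofPrime S Mx (hRS hr))
  · intro hyB
    set e₁ : ↥(LocalSubring.ofPrime S Mx).toSubring :=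
      algebraMap ↥S ↥(LocalSubring.ofPrime S Mx).toSubring (⟨y⁻¹, hyinvS⟩ : ↥S) with he₁def
    have hyMx : (⟨y⁻¹, hyinvS⟩ : ↥S) ∈ Mx := hJMx (Ideal.subset_span rfl)
    have hnotunit : ¬ IsUnit e₁ := by
      intro hu
      have := (IsLocalization.AtPrime.isUnit_to_map_iff
        (LocalSubring.ofPrime S Mx).toSubring Mx (⟨y⁻¹, hyinvS⟩ : ↥S)).mp hu
      exact this hyMx
    have hcoee₁ : ((Subring.inclusion hle) e₁ : K) = y⁻¹ := rfl
    have hunit : IsUnit ((Subring.inclusion hle) e₁) := by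
      refine isUnit_iff_exists_inv.mpr ⟨⟨y, hyB⟩, ?_⟩
      apply Subtype.ext
      show ((Subring.inclusion hle) e₁ : K) * y = 1
      rw [hcoee₁]
      exact inv_mul_cancel₀ hy0
    exact hnotunit (hloc.1 _ hunit)

end Main

end Aux

theorem stmt18 (D : Type*) [CommRing D] [IsDomain D] :
    @closure (Subalgebra D (FractionRing D)) (patchOf (zarOverTop D (FractionRing D)))
        {R : Subalgebra D (FractionRing D) | IsPrufer ↥R ∧ IsSemilocal ↥R} =
      {R : Subalgebra D (FractionRing D) | IsIntegrallyClosed ↥R} := by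
  classical
  letI tP : TopologicalSpace (Subalgebra D (FractionRing D)) :=
    patchOf (zarOverTop D (FractionRing D))
  apply subset_antisymm
  · -- closure of semilocal Prüfer overrings ⊆ integrally closed overrings
    have hsub : {R : Subalgebra D (FractionRing D) | IsPrufer ↥R ∧ IsSemilocal ↥R} ⊆
        {R : Subalgebra D (FractionRing D) | IsIntegrallyClosed ↥R} := by
      intro A hA
      exact Aux.ic_of_intG A (fun x hx => Aux.prufer_mem_of_intG A hA.1 hx)
    have hclosed : IsClosed {R : Subalgebra D (FractionRing D) | IsIntegrallyClosed ↥R} := by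
      rw [← isOpen_compl_iff]
      rw [isOpen_iff_forall_mem_open]
      intro R hR
      obtain ⟨x, hxint, hxR⟩ : ∃ x, Aux.IntG (R : Set (FractionRing D)) x ∧ x ∉ R := by
        by_contra hcon
        push_neg at hcon
        exact hR (Aux.ic_of_intG R hcon)
      obtain ⟨p, hpm, hpc, hpe⟩ := hxint
      refine ⟨Aux.BB D (↑p.coeffs : Set (FractionRing D)) ∩ (Aux.BB D {x})ᶜ, ?_, ?_, ?_, ?_⟩
      · rintro A ⟨hAF, hAx⟩
        intro hICA
        have hxA : x ∉ A := by
          intro hxA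
          exact hAx (Set.singleton_subset_iff.mpr hxA)
        refine hxA (Aux.intG_mem_of_ic A hICA ⟨p, hpm, fun i => ?_, hpe⟩)
        by_cases hc : p.coeff i = 0
        · rw [hc]; exact zero_mem A
        · exact hAF (by exact_mod_cast Polynomial.coeff_mem_coeffs hc)
      · exact IsOpen.inter (Aux.patch_isOpen_BB p.coeffs.finite_toSet)
          (Aux.patch_isOpen_BB_compl (Set.finite_singleton x))
      · intro c hc
        obtain ⟨i, _, rfl⟩ := Polynomial.mem_coeffs_iff.mp (by exact_mod_cast hc)
        exact hpc i
      · intro hmem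
        exact hxR (hmem rfl)
    exact closure_minimal hsub hclosed
  · -- integrally closed overrings ⊆ closure
    intro R hR
    have hICG : ∀ z, Aux.IntG (R : Set (FractionRing D)) z → z ∈ R :=
      fun z hz => Aux.intG_mem_of_ic R hR hz
    rw [mem_closure_iff]
    intro U hU hRU
    obtain ⟨tset, htfin, htgen, hRt, htsub⟩ := Aux.exists_finite_inter hU hRU
    -- for each generator, extract finitely many elements to avoid
    have hch : ∀ W : Set (Subalgebra D (FractionRing D)),
        ∃ YWs : Set (FractionRing D), YWs.Finite ∧
        (W ∈ tset → ((∀ y ∈ YWs, y ∉ R) ∧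
          (∀ T : Subalgebra D (FractionRing D), (R : Set (FractionRing D)) ⊆ ↑T →
            (∀ y ∈ YWs, y ∉ T) → T ∈ W))) := by
      intro W
      by_cases hW : W ∈ tset
      · have hRW : R ∈ W := Set.mem_sInter.mp hRt W hW
        rcases htgen hW with ⟨hWc, hWo⟩ | ⟨hWc, hWo⟩
        · obtain ⟨F, hFfin, hFR, hFW⟩ := Aux.zar_mem_basic hWo hRW
          exact ⟨∅, Set.finite_empty, fun _ => ⟨by simp,
            fun T hRT _ => hFW (subset_trans hFR hRT)⟩⟩
        · obtain ⟨I, hIfin, hIF, hIcov⟩ := Aux.compact_open_eq_union hWc hWo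
          have hpick : ∀ F : Set (FractionRing D), ∃ y, F ∈ I → (y ∈ F ∧ y ∉ R) := by
            intro F
            by_cases hF : F ∈ I
            · have hnotBB : R ∉ Aux.BB D F := by
                intro hmem
                exact ((hIF F hF).2 hmem) hRW
              have : ∃ y ∈ F, y ∉ (R : Set (FractionRing D)) := by
                by_contra hcon
                push_neg at hcon
                exact hnotBB hcon
              obtain ⟨y, hy1, hy2⟩ := this
              exact ⟨y, fun _ => ⟨hy1, hy2⟩⟩
            · exact ⟨0, fun h => absurd h hF⟩
          choose yF hyF using hpick
          refine ⟨(fun F => yF F) '' I, hIfin.image _, fun _ => ⟨?_, ?_⟩⟩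
          · rintro y ⟨F, hF, rfl⟩
            exact (hyF F hF).2
          · intro T hRT hyT
            by_contra hTW
            obtain ⟨F, hF, hTF⟩ := Set.mem_iUnion₂.mp (hIcov hTW)
            exact hyT (yF F) ⟨F, hF, rfl⟩ (hTF ((hyF F hF).1))
      · exact ⟨∅, Set.finite_empty, fun h => absurd h hW⟩
    choose YW hYfin hYprop using hch
    set Y : Set (FractionRing D) := ⋃ W ∈ tset, YW W with hYdef
    have hYfin' : Y.Finite := htfin.biUnion (fun W _ => hYfin W)
    -- choose valuation overrings excluding each bad element
    have hVy : ∀ y : FractionRing D, ∃ V : ValuationSubring (FractionRing D),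
        y ∈ Y → ((R : Set (FractionRing D)) ⊆ ↑V ∧ y ∉ V) := by
      intro y
      by_cases hyY : y ∈ Y
      · have hyR : y ∉ R := by
          obtain ⟨W, hWt, hyW⟩ := Set.mem_iUnion₂.mp hyY
          exact (hYprop W hWt).1 y hyW
        obtain ⟨V, hV1, hV2⟩ := Aux.exists_val_overring R hICG hyR
        exact ⟨V, fun _ => ⟨hV1, hV2⟩⟩
      · exact ⟨⊤, fun h => absurd h hyY⟩
    choose Vy hVy' using hVy
    set fam0 : Finset (ValuationSubring (FractionRing D)) :=
      insert ⊤ (hYfin'.toFinset.image Vy) with hfam0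
    have hfam0R : ∀ V ∈ fam0, (R : Set (FractionRing D)) ⊆ ↑V := by
      intro V hV
      rcases Finset.mem_insert.mp hV with h | h
      · subst h
        intro z _
        exact ValuationSubring.mem_top z
      · obtain ⟨y, hy, rfl⟩ := Finset.mem_image.mp h
        exact (hVy' y (hYfin'.mem_toFinset.mp hy)).1
    set fam : Finset (ValuationSubring (FractionRing D)) :=
      fam0.filter (fun V => ∀ W ∈ fam0, W ≤ V → W = V) with hfam
    have hfam_sub : fam ⊆ fam0 := Finset.filter_subset _ _
    have hfam_ne : fam.Nonempty := by
      obtain ⟨m, hm, hmin⟩ := fam0.exists_minimal ⟨⊤, Finset.mem_insert_self _ _⟩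
      refine ⟨m, Finset.mem_filter.mpr ⟨hm, fun W hW hle => ?_⟩⟩
      by_contra hne
      exact hne (le_antisymm hle (hmin hW hle))
    have hfam_inc : ∀ U' ∈ fam, ∀ W ∈ fam, U' ≠ W → ¬ U' ≤ W := by
      intro U' hU' W hW hne hle
      exact hne ((Finset.mem_filter.mp hW).2 U' (hfam_sub hU') hle)
    have hfam_min : ∀ V ∈ fam0, ∃ U' ∈ fam, U' ≤ V := by
      intro V hV
      obtain ⟨m, hm, hmin⟩ := (fam0.filter (fun W => W ≤ V)).exists_minimal
        ⟨V, Finset.mem_filter.mpr ⟨hV, le_refl V⟩⟩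
      have hm0 : m ∈ fam0 := (Finset.mem_filter.mp hm).1
      have hmV : m ≤ V := (Finset.mem_filter.mp hm).2
      refine ⟨m, Finset.mem_filter.mpr ⟨hm0, fun W hW hle => ?_⟩, hmV⟩
      by_contra hne
      exact hne (le_antisymm hle (hmin (Finset.mem_filter.mpr ⟨hW, le_trans hle hmV⟩) hle))
    set T : Subalgebra D (FractionRing D) :=
      { carrier := {z : FractionRing D | ∀ U' ∈ fam, z ∈ U'}
        mul_mem' := fun ha hb U' hU' => mul_mem (ha U' hU') (hb U' hU')
        add_mem' := fun ha hb U' hU' => add_mem (ha U' hU') (hb U' hU')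
        algebraMap_mem' := fun d U' hU' =>
          hfam0R U' (hfam_sub hU') (R.algebraMap_mem d) } with hT
    have hmemT : ∀ z : FractionRing D, z ∈ T ↔ ∀ U' ∈ fam, z ∈ U' := fun z => Iff.rfl
    have hRT : (R : Set (FractionRing D)) ⊆ (T : Set (FractionRing D)) :=
      fun r hr U' hU' => hfam0R U' (hfam_sub hU') hr
    have hTint : T ∈ ⋂₀ tset := by
      rw [Set.mem_sInter]
      intro W hW
      refine (hYprop W hW).2 T hRT ?_
      intro y hy hyT
      have hyY : y ∈ Y := Set.mem_iUnion₂.mpr ⟨W, hW, hy⟩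
      have hVy0 : Vy y ∈ fam0 := Finset.mem_insert_of_mem
        (Finset.mem_image.mpr ⟨y, hYfin'.mem_toFinset.mpr hyY, rfl⟩)
      obtain ⟨U', hU', hle⟩ := hfam_min (Vy y) hVy0
      exact (hVy' y hyY).2 (hle (hyT U' hU'))
    exact ⟨T, htsub hTint,
      Aux.pack_prufer T fam hmemT hfam_ne hfam_inc,
      Aux.pack_semilocal T fam hmemT hfam_ne⟩
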